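/- Let e ∈ {1,…,p−1} and let v ∈ ⟨e⟩_p. Then the zeroth p-adic digit of v equals e or p−e, i.e. a_0(v) ∈ {e, p−e}. -/
import Mathlib


open scoped Classical

namespace SL2

/-- the `i`-th digit of `v` in base `p`. -/
def digit (p v i : ℕ) : ℕ := v / p ^ i % p

/-- position of the leading (highest nonzero) digit of `v ≥ 1`. -/
def lead (p v : ℕ) : ℕ := Nat.log p v

/-- a nonempty set of consecutive integers -/
def IsStretch (S : Finset ℕ) : Prop :=
  S.Nonempty ∧ ∀ a ∈ S, ∀ b ∈ S, ∀ c, a ≤ c → c ≤ b → c ∈ S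

/-- `S` is down-admissible for `v`. -/
def DownAdm (p v : ℕ) (S : Finset ℕ) : Prop :=
  (∀ s ∈ S, (s = 0 ∨ s - 1 ∉ S) → digit p v s ≠ 0) ∧
  (∀ s ∈ S, digit p v (s + 1) = 0 → s + 1 ∈ S)

/-- `S` is up-admissible for `v`. -/
def UpAdm (p v : ℕ) (S : Finset ℕ) : Prop :=
  (∀ s ∈ S, (s = 0 ∨ s - 1 ∉ S) → digit p v s ≠ 0) ∧
  (∀ s ∈ S, digit p v (s + 1) = p - 1 → s + 1 ∈ S)

/-- the downward reflection `v[S]`. -/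
def reflDown (p v : ℕ) (S : Finset ℕ) : ℕ :=
  (∑ i ∈ Finset.range (lead p v + 1),
    (if i ∈ S then -((digit p v i : ℤ) * p ^ i) else ((digit p v i : ℤ) * p ^ i))).toNat

/-- the upward reflection `v(S)`. -/
def reflUp (p v : ℕ) (S : Finset ℕ) : ℕ :=
  (∑ i ∈ Finset.range (lead p v + 2),
    (if i ∈ S then -((digit p v i : ℤ) * p ^ i)
     else if i - 1 ∈ S ∧ 1 ≤ i then ((digit p v i : ℤ) + 2) * p ^ i
     else (digit p v i : ℤ) * p ^ i)).toNat

/-- `T` is the down-admissible hull of `S` for `v`. -/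
def IsHull (p v : ℕ) (S T : Finset ℕ) : Prop :=
  DownAdm p v T ∧ S ⊆ T ∧ ∀ T', DownAdm p v T' → S ⊆ T' → T ⊆ T'

noncomputable def hull (p v : ℕ) (S : Finset ℕ) : Finset ℕ :=
  if h : ∃ T, IsHull p v S T then h.choose else ∅

/-- `v[⟨i⟩]`, the downward reflection of `v` along the down-admissible hull of `{i}`. -/
noncomputable def reflDownHull (p v i : ℕ) : ℕ := reflDown p v (hull p v {i})

/-- `D_v`, the set of positions of nonzero non-leading digits of `v`. -/
def Dset (p v : ℕ) : Finset ℕ :=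
  (Finset.range (lead p v)).filter (fun i => digit p v i ≠ 0)

/-- one step of the relation generating `∼_S`. -/
noncomputable def SimStep (p : ℕ) (S : Finset ℕ) (v w : ℕ) : Prop :=
  v ≠ w ∧ S ⊆ Dset p v ∧ S ⊆ Dset p w ∧
    ∃ k ∈ Dset p v, k ∉ S ∧ w = reflDownHull p v k

/-- the equivalence relation `∼_S`. -/
noncomputable def Sim (p : ℕ) (S : Finset ℕ) (v w : ℕ) : Prop :=
  Relation.EqvGen (SimStep p S) v w

/-- the set `C_v`. -/
noncomputable def Cset (p v : ℕ) : Set ℕ := {w | 1 ≤ w ∧ Sim p (Dset p v) v w}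

/-- minimal down-admissible stretch for `v`. -/
def MinDownStretch (p v : ℕ) (S : Finset ℕ) : Prop :=
  DownAdm p v S ∧ IsStretch S ∧
    ∀ T ⊆ S, DownAdm p v T → IsStretch T → T = S

/-- minimal up-admissible stretch for `v`. -/
def MinUpStretch (p v : ℕ) (S : Finset ℕ) : Prop :=
  UpAdm p v S ∧ IsStretch S ∧
    ∀ T ⊆ S, UpAdm p v T → IsStretch T → T = S

/-- adjacency in the graph underlying the quiver algebra. -/
def BlockAdj (p : ℕ) (v w : ℕ) : Prop :=
  (1 ≤ v ∧ 1 ≤ w) ∧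
    ((∃ S, MinDownStretch p v S ∧ w = reflDown p v S) ∨
     (∃ S, MinDownStretch p w S ∧ v = reflDown p w S))

/-- the block `⟨e⟩_p`: the connected component of `e`. -/
def block (p e : ℕ) : Set ℕ := {v | 1 ≤ v ∧ Relation.ReflTransGen (BlockAdj p) e v}

/-- `e` is an eve: exactly one nonzero `p`-adic digit. -/
def IsEve (p e : ℕ) : Prop := 1 ≤ e ∧ Dset p e = ∅

lemma digit_zero (p v : ℕ) : digit p v 0 = v % p := by simp [digit]

lemma digit_lt (p v i : ℕ) (hp : 0 < p) : digit p v i < p := Nat.mod_lt _ hp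

/-- key lemma: the zeroth digit of a downward reflection. -/
lemma refl_digit0 {p v w : ℕ} (hp : 0 < p) {S : Finset ℕ}
    (hS : DownAdm p v S) (hw : w = reflDown p v S) (hw1 : 1 ≤ w) :
    (0 ∉ S ∧ digit p w 0 = digit p v 0) ∨
    (0 ∈ S ∧ digit p v 0 ≠ 0 ∧ digit p w 0 = p - digit p v 0) := by
  set g : ℕ → ℤ := fun i =>
    if i ∈ S then -((digit p v i : ℤ) * p ^ i) else ((digit p v i : ℤ) * p ^ i) with hg
  set N : ℤ := ∑ i ∈ Finset.range (lead p v + 1), g i with hN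
  have hwN : w = N.toNat := hw
  have hNpos : 0 ≤ N := by
    by_contra h
    have : N.toNat = 0 := Int.toNat_of_nonpos (le_of_not_ge h)
    omega
  have hwZ : (w : ℤ) = N := by rw [hwN, Int.toNat_of_nonneg hNpos]
  have hdvd : (p : ℤ) ∣ ∑ i ∈ Finset.range (lead p v), g (i + 1) := by
    apply Finset.dvd_sum
    intro i _
    simp only [hg]
    split
    · exact dvd_neg.mpr ((dvd_pow_self (p : ℤ) (Nat.succ_ne_zero i)).mul_left _)
    · exact (dvd_pow_self (p : ℤ) (Nat.succ_ne_zero i)).mul_left _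
  have hmod : N % (p : ℤ) = g 0 % (p : ℤ) := by
    rw [hN, Finset.sum_range_succ']
    obtain ⟨c, hc⟩ := hdvd
    rw [hc, add_comm, Int.add_mul_emod_self_left]
  have hwmod : ((digit p w 0 : ℕ) : ℤ) = g 0 % (p : ℤ) := by
    rw [digit_zero]
    push_cast
    rw [hwZ, hmod]
  have hd0lt : digit p v 0 < p := digit_lt p v 0 hp
  by_cases h0 : 0 ∈ S
  · right
    have hd0ne : digit p v 0 ≠ 0 := hS.1 0 h0 (Or.inl rfl)
    refine ⟨h0, hd0ne, ?_⟩
    have : g 0 = -(digit p v 0 : ℤ) := by simp [hg, h0]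
    rw [this] at hwmod
    have : (-(digit p v 0 : ℤ)) % (p : ℤ) = (p : ℤ) - digit p v 0 := by
      rw [show -((digit p v 0 : ℤ)) = ((p : ℤ) - digit p v 0) + p * (-1) by ring,
        Int.add_mul_emod_self_left, Int.emod_eq_of_lt (by omega) (by omega)]
    rw [this] at hwmod
    omega
  · left
    refine ⟨h0, ?_⟩
    have : g 0 = (digit p v 0 : ℤ) := by simp [hg, h0]
    rw [this] at hwmod
    rw [Int.emod_eq_of_lt (by positivity) (by exact_mod_cast hd0lt)] at hwmod
    omega

end SL2

/-- For `e ∈ {1,…,p−1}` and `v ∈ ⟨e⟩_p`, the zeroth digit of `v` is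
`e` or `p − e`. -/
theorem SL2.stmt2 (p : ℕ) (hp : p.Prime) (e : ℕ) (he1 : 1 ≤ e) (he2 : e ≤ p - 1)
    (v : ℕ) (hv : v ∈ SL2.block p e) :
    SL2.digit p v 0 = e ∨ SL2.digit p v 0 = p - e := by
  have hp0 : 0 < p := hp.pos
  have hp2 : 2 ≤ p := hp.two_le
  induction hv.2 with
  | refl =>
    left
    rw [SL2.digit_zero]
    exact Nat.mod_eq_of_lt (by omega)
  | tail hab hbc ih =>
    rename_i b c
    have ihb := ih ⟨by rcases hbc with ⟨⟨h1, _⟩, _⟩; exact h1, hab⟩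
    obtain ⟨⟨hb1, hc1⟩, hcase⟩ := hbc
    rcases hcase with ⟨S, hSmin, hc⟩ | ⟨S, hSmin, hb⟩
    · rcases SL2.refl_digit0 hp0 hSmin.1 hc hc1 with ⟨_, heq⟩ | ⟨_, hne, heq⟩
      · rw [heq]; exact ihb
      · have := SL2.digit_lt p b 0 hp0
        omega
    · rcases SL2.refl_digit0 hp0 hSmin.1 hb hb1 with ⟨_, heq⟩ | ⟨_, hne, heq⟩
      · rw [← heq]; exact ihb
      · have := SL2.digit_lt p c 0 hp0
        omega
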